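/- For every t ∈ {1,…,T} and every extreme point (x, y, s, w, z) of the polytope P1 = conv(Q1), the stock level s_t belongs to the set S_t. -/

import Mathlib

noncomputable section

/-- Membership in the feasible region `Q1` of the warehouse problem with
time-dependent bounds, fixed costs and complementarity constraints.  Vectors
are encoded as `ℕ`-indexed real sequences that vanish outside the planning
horizon `{1,…,T}` (the stock `s` carries the initial stock at index `0`). -/
def Q1mem (T : ℕ) (s0 : ℝ) (Ls Us Lx Ux Ly Uy : ℕ → ℝ)
    (x y s w z : ℕ → ℝ) : Prop :=
  s 0 = s0 ∧
  (∀ t, 1 ≤ t → t ≤ T →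
    s t = s (t - 1) - y t + x t ∧
    x t * y t = 0 ∧
    Ls t ≤ s t ∧ s t ≤ Us t ∧
    Ly t * z t ≤ y t ∧ y t ≤ Uy t * z t ∧
    Lx t * w t ≤ x t ∧ x t ≤ Ux t * w t ∧
    (w t = 0 ∨ w t = 1) ∧ (z t = 0 ∨ z t = 1)) ∧
  (∀ t, ¬(1 ≤ t ∧ t ≤ T) →
    x t = 0 ∧ y t = 0 ∧ w t = 0 ∧ z t = 0 ∧ (t ≠ 0 → s t = 0))

def Q1 (T : ℕ) (s0 : ℝ) (Ls Us Lx Ux Ly Uy : ℕ → ℝ) :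
    Set ((ℕ → ℝ) × (ℕ → ℝ) × (ℕ → ℝ) × (ℕ → ℝ) × (ℕ → ℝ)) :=
  {p | Q1mem T s0 Ls Us Lx Ux Ly Uy p.1 p.2.1 p.2.2.1 p.2.2.2.1 p.2.2.2.2}

/-- `v` is a `{0,1}`-vector. -/
def IsBinaryVec (v : ℕ → ℝ) : Prop := ∀ i, v i = 0 ∨ v i = 1

/-- The set `S_t` of potential stock levels at the end of period `t`. -/
def stockLevelSet (T t : ℕ) (s0 : ℝ) (Ls Us Lx Ux Ly Uy : ℕ → ℝ) : Set ℝ :=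
  ({r | ∃ K, (K = s0 ∨ (∃ i, 1 ≤ i ∧ i ≤ t ∧ K = Us i) ∨
        (∃ i, 1 ≤ i ∧ i ≤ t ∧ K = Ls i)) ∧
      ∃ v1 v2 u1 u2 : ℕ → ℝ,
        IsBinaryVec v1 ∧ IsBinaryVec v2 ∧ IsBinaryVec u1 ∧ IsBinaryVec u2 ∧
        (∀ i, v1 i + v2 i + u1 i + u2 i ≤ 1) ∧
        r = K - (∑ i ∈ Finset.Icc 1 t, (v1 i * Ly i + v2 i * Uy i))
              + ∑ i ∈ Finset.Icc 1 t, (u1 i * Lx i + u2 i * Ux i)} ∪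
    {r | ∃ K', ((∃ i, t + 1 ≤ i ∧ i ≤ T ∧ K' = Us i) ∨
        (∃ i, t + 1 ≤ i ∧ i ≤ T ∧ K' = Ls i)) ∧
      ∃ v3 v4 u3 u4 : ℕ → ℝ,
        IsBinaryVec v3 ∧ IsBinaryVec v4 ∧ IsBinaryVec u3 ∧ IsBinaryVec u4 ∧
        (∀ i, v3 i + v4 i + u3 i + u4 i ≤ 1) ∧
        r = K' + (∑ i ∈ Finset.Icc (t + 1) T, (v3 i * Ly i + v4 i * Uy i))
              - ∑ i ∈ Finset.Icc (t + 1) T, (u3 i * Lx i + u4 i * Ux i)}) ∩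
    Set.Icc (Ls t) (Us t)

lemma exists_eps (F : Finset ℕ) (g : ℕ → ℝ) (hg : ∀ k ∈ F, 0 < g k)
    (e : ℝ) (he : 0 < e) : ∃ ε : ℝ, 0 < ε ∧ ε ≤ e ∧ ∀ k ∈ F, ε ≤ g k := by
  classical
  refine ⟨(insert e (F.image g)).min' ⟨e, Finset.mem_insert_self _ _⟩, ?_, ?_, ?_⟩
  · refine (Finset.lt_min'_iff ..).2 ?_
    intro b hb
    rcases Finset.mem_insert.1 hb with rfl | hb
    · exact he
    · obtain ⟨k, hk, rfl⟩ := Finset.mem_image.1 hb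
      exact hg k hk
  · exact Finset.min'_le _ _ (Finset.mem_insert_self _ _)
  · intro k hk
    exact Finset.min'_le _ _ (Finset.mem_insert.2 (Or.inr (Finset.mem_image_of_mem g hk)))

lemma extreme_perturb {E : Type*} [AddCommGroup E] [Module ℝ E] {A : Set E} {p d : E} {ε : ℝ}
    (hp : p ∈ Set.extremePoints ℝ (convexHull ℝ A)) (hε : 0 < ε)
    (h1 : p + ε • d ∈ A) (h2 : p - ε • d ∈ A) : d = 0 := by
  obtain ⟨hpA, hE⟩ := hp
  have hseg : p ∈ openSegment ℝ (p - ε • d) (p + ε • d) := by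
    refine ⟨1/2, 1/2, by norm_num, by norm_num, by norm_num, ?_⟩
    module
  have h := (hE (subset_convexHull ℝ A h2) (subset_convexHull ℝ A h1) hseg)
  have hz : ε • d = 0 := by
    have := congrArg (fun q => q - p) h
    simpa [add_sub_cancel_left] using this
  rcases smul_eq_zero.1 hz with h' | h'
  · exact absurd h' (ne_of_gt hε)
  · exact h'

lemma telescope {T : ℕ} {s0 : ℝ} {Ls Us Lx Ux Ly Uy x y s w z : ℕ → ℝ}
    (hQ : Q1mem T s0 Ls Us Lx Ux Ly Uy x y s w z) :
    ∀ a c, a ≤ c → c ≤ T → s c = s a + ∑ i ∈ Finset.Icc (a + 1) c, (x i - y i) := by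
  intro a c
  induction c with
  | zero =>
    intro hac _
    interval_cases a
    simp
  | succ n ih =>
    intro hac hcT
    rcases Nat.eq_or_lt_of_le hac with rfl | hlt
    · simp
    · have han : a ≤ n := by omega
      rw [← Finset.insert_Icc_right_eq_Icc_add_one (by omega), Finset.sum_insert (by simp)]
      have hrec := (hQ.2.1 (n + 1) (by omega) hcT).1
      simp only [Nat.add_sub_cancel] at hrec
      rw [hrec, ih han (by omega)]
      ring

/-- admissible per-period coefficient quadruple `(v1, v2, u1, u2)`. -/
def RepCoef (LyI UyI LxI UxI xi yi : ℝ) : Prop :=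
  ∃ c : ℝ × ℝ × ℝ × ℝ,
    (c.1 = 0 ∨ c.1 = 1) ∧ (c.2.1 = 0 ∨ c.2.1 = 1) ∧ (c.2.2.1 = 0 ∨ c.2.2.1 = 1) ∧
    (c.2.2.2 = 0 ∨ c.2.2.2 = 1) ∧ c.1 + c.2.1 + c.2.2.1 + c.2.2.2 ≤ 1 ∧
    xi - yi = (c.2.2.1 * LxI + c.2.2.2 * UxI) - (c.1 * LyI + c.2.1 * UyI)

lemma rep_or_free {T : ℕ} {s0 : ℝ} {Ls Us Lx Ux Ly Uy x y s w z : ℕ → ℝ}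
    (hQ : Q1mem T s0 Ls Us Lx Ux Ly Uy x y s w z) {i : ℕ} (hi1 : 1 ≤ i) (hiT : i ≤ T) :
    RepCoef (Ly i) (Uy i) (Lx i) (Ux i) (x i) (y i) ∨
    (y i = 0 ∧ w i = 1 ∧ Lx i < x i ∧ x i < Ux i) ∨
    (x i = 0 ∧ z i = 1 ∧ Ly i < y i ∧ y i < Uy i) := by
  obtain ⟨-, hxy, -, -, hy1, hy2, hx1, hx2, hw, hz⟩ := hQ.2.1 i hi1 hiT
  have hxcase : x i = 0 ∨ y i = 0 := mul_eq_zero.1 hxy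
  -- helper: representation for x-side (y = 0)
  have repx : y i = 0 → x i = Lx i * w i ∨ x i = Ux i * w i →
      RepCoef (Ly i) (Uy i) (Lx i) (Ux i) (x i) (y i) := by
    intro hy hx
    rcases hw with hw0 | hw1
    · refine ⟨(0, 0, 0, 0), by norm_num, by norm_num, by norm_num, by norm_num, by norm_num, ?_⟩
      rcases hx with hx | hx <;> simp [hx, hy, hw0]
    · rcases hx with hx | hx
      · exact ⟨(0, 0, 1, 0), by norm_num, by norm_num, by norm_num, by norm_num, by norm_num,
          by simp [hx, hy, hw1]⟩
      · exact ⟨(0, 0, 0, 1), by norm_num, by norm_num, by norm_num, by norm_num, by norm_num,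
          by simp [hx, hy, hw1]⟩
  have repy : x i = 0 → y i = Ly i * z i ∨ y i = Uy i * z i →
      RepCoef (Ly i) (Uy i) (Lx i) (Ux i) (x i) (y i) := by
    intro hx hy
    rcases hz with hz0 | hz1
    · refine ⟨(0, 0, 0, 0), by norm_num, by norm_num, by norm_num, by norm_num, by norm_num, ?_⟩
      rcases hy with hy | hy <;> simp [hx, hy, hz0]
    · rcases hy with hy | hy
      · exact ⟨(1, 0, 0, 0), by norm_num, by norm_num, by norm_num, by norm_num, by norm_num,
          by simp [hx, hy, hz1]⟩
      · exact ⟨(0, 1, 0, 0), by norm_num, by norm_num, by norm_num, by norm_num, by norm_num,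
          by simp [hx, hy, hz1]⟩
  rcases hxcase with hx0 | hy0
  · -- x i = 0 : consider y
    rcases hz with hz0 | hz1
    · have hy0 : y i = 0 := le_antisymm (by simpa [hz0] using hy2) (by simpa [hz0] using hy1)
      exact Or.inl (repy hx0 (Or.inl (by simp [hy0, hz0])))
    · rcases eq_or_lt_of_le hy1 with hy | hy
      · exact Or.inl (repy hx0 (Or.inl hy.symm))
      · rcases eq_or_lt_of_le hy2 with hy' | hy'
        · exact Or.inl (repy hx0 (Or.inr hy'))
        · exact Or.inr (Or.inr ⟨hx0, hz1, by simpa [hz1] using hy, by simpa [hz1] using hy'⟩)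
  · rcases hw with hw0 | hw1
    · have hx0 : x i = 0 := le_antisymm (by simpa [hw0] using hx2) (by simpa [hw0] using hx1)
      exact Or.inl (repx hy0 (Or.inl (by simp [hx0, hw0])))
    · rcases eq_or_lt_of_le hx1 with hx | hx
      · exact Or.inl (repx hy0 (Or.inl hx.symm))
      · rcases eq_or_lt_of_le hx2 with hx' | hx'
        · exact Or.inl (repx hy0 (Or.inr hx'))
        · exact Or.inr (Or.inl ⟨hy0, hw1, by simpa [hw1] using hx, by simpa [hw1] using hx'⟩)

lemma assemble (Ly Uy Lx Ux x y : ℕ → ℝ) (lo hi : ℕ)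
    (h : ∀ i, lo ≤ i → i ≤ hi → RepCoef (Ly i) (Uy i) (Lx i) (Ux i) (x i) (y i)) :
    ∃ v1 v2 u1 u2 : ℕ → ℝ, IsBinaryVec v1 ∧ IsBinaryVec v2 ∧ IsBinaryVec u1 ∧ IsBinaryVec u2 ∧
      (∀ i, v1 i + v2 i + u1 i + u2 i ≤ 1) ∧
      (∀ i, ¬(lo ≤ i ∧ i ≤ hi) → v1 i = 0 ∧ v2 i = 0 ∧ u1 i = 0 ∧ u2 i = 0) ∧
      (∀ i, lo ≤ i → i ≤ hi →
        x i - y i = (u1 i * Lx i + u2 i * Ux i) - (v1 i * Ly i + v2 i * Uy i)) := by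
  classical
  set g : ℕ → ℝ × ℝ × ℝ × ℝ := fun i =>
    if hc : lo ≤ i ∧ i ≤ hi then Classical.choose (h i hc.1 hc.2) else (0, 0, 0, 0) with hg
  have hgspec : ∀ i, lo ≤ i → i ≤ hi →
      ((g i).1 = 0 ∨ (g i).1 = 1) ∧ ((g i).2.1 = 0 ∨ (g i).2.1 = 1) ∧
      ((g i).2.2.1 = 0 ∨ (g i).2.2.1 = 1) ∧ ((g i).2.2.2 = 0 ∨ (g i).2.2.2 = 1) ∧
      (g i).1 + (g i).2.1 + (g i).2.2.1 + (g i).2.2.2 ≤ 1 ∧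
      x i - y i = ((g i).2.2.1 * Lx i + (g i).2.2.2 * Ux i) -
        ((g i).1 * Ly i + (g i).2.1 * Uy i) := by
    intro i h1 h2
    have : g i = Classical.choose (h i h1 h2) := by simp [hg, h1, h2]
    rw [this]
    exact Classical.choose_spec (h i h1 h2)
  have hgzero : ∀ i, ¬(lo ≤ i ∧ i ≤ hi) → g i = (0, 0, 0, 0) := by
    intro i hi'; simp [hg, hi']
  refine ⟨fun i => (g i).1, fun i => (g i).2.1, fun i => (g i).2.2.1, fun i => (g i).2.2.2,
    ?_, ?_, ?_, ?_, ?_, ?_, ?_⟩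
  · intro i
    by_cases hc : lo ≤ i ∧ i ≤ hi
    · exact (hgspec i hc.1 hc.2).1
    · left; simp [hgzero i hc]
  · intro i
    by_cases hc : lo ≤ i ∧ i ≤ hi
    · exact (hgspec i hc.1 hc.2).2.1
    · left; simp [hgzero i hc]
  · intro i
    by_cases hc : lo ≤ i ∧ i ≤ hi
    · exact (hgspec i hc.1 hc.2).2.2.1
    · left; simp [hgzero i hc]
  · intro i
    by_cases hc : lo ≤ i ∧ i ≤ hi
    · exact (hgspec i hc.1 hc.2).2.2.2.1
    · left; simp [hgzero i hc]
  · intro i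
    by_cases hc : lo ≤ i ∧ i ≤ hi
    · exact (hgspec i hc.1 hc.2).2.2.2.2.1
    · simp [hgzero i hc]
  · intro i hc
    simp [hgzero i hc]
  · intro i h1 h2
    exact (hgspec i h1 h2).2.2.2.2.2

lemma perturb_mem {T : ℕ} {s0 : ℝ} {Ls Us Lx Ux Ly Uy x y s w z : ℕ → ℝ}
    (hQ : Q1mem T s0 Ls Us Lx Ux Ly Uy x y s w z) (dx dy ds : ℕ → ℝ) (δ : ℝ)
    (H0 : ds 0 = 0)
    (H1 : ∀ k, 1 ≤ k → k ≤ T → ds k = ds (k - 1) - dy k + dx k)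
    (H2 : ∀ k, ¬(1 ≤ k ∧ k ≤ T) → dx k = 0 ∧ dy k = 0 ∧ ds k = 0)
    (H3 : ∀ k, 1 ≤ k → k ≤ T →
      Ls k ≤ s k + δ * ds k ∧ s k + δ * ds k ≤ Us k ∧
      Ly k * z k ≤ y k + δ * dy k ∧ y k + δ * dy k ≤ Uy k * z k ∧
      Lx k * w k ≤ x k + δ * dx k ∧ x k + δ * dx k ≤ Ux k * w k ∧
      (x k + δ * dx k) * (y k + δ * dy k) = 0) :
    Q1mem T s0 Ls Us Lx Ux Ly Uy (x + δ • dx) (y + δ • dy) (s + δ • ds) w z := by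
  obtain ⟨hs0, hin, hout⟩ := hQ
  refine ⟨?_, fun k hk1 hkT => ?_, fun k hk => ?_⟩
  · simp [hs0, H0]
  · obtain ⟨he, -, -, -, -, -, -, -, hw, hz⟩ := hin k hk1 hkT
    obtain ⟨g1, g2, g3, g4, g5, g6, g7⟩ := H3 k hk1 hkT
    refine ⟨?_, by simpa using g7, by simpa using g1, by simpa using g2,
      by simpa using g3, by simpa using g4, by simpa using g5, by simpa using g6, hw, hz⟩
    have hd := H1 k hk1 hkT
    simp only [Pi.add_apply, Pi.smul_apply, smul_eq_mul]
    rw [he, hd]; ring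
  · obtain ⟨hx0, hy0, hw0, hz0, hs'⟩ := hout k hk
    obtain ⟨e1, e2, e3⟩ := H2 k hk
    exact ⟨by simp [hx0, e1], by simp [hy0, e2], hw0, hz0,
      fun hk0 => by simp [hs' hk0, e3]⟩

lemma free_dir {T : ℕ} {s0 : ℝ} {Ls Us Lx Ux Ly Uy x y s w z : ℕ → ℝ}
    (hQ : Q1mem T s0 Ls Us Lx Ux Ly Uy x y s w z) {m : ℕ} (hm1 : 1 ≤ m) (hmT : m ≤ T)
    (σ : ℝ) (hσ : σ = 1 ∨ σ = -1)
    (hfree : (y m = 0 ∧ w m = 1 ∧ Lx m < x m ∧ x m < Ux m) ∨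
             (x m = 0 ∧ z m = 1 ∧ Ly m < y m ∧ y m < Uy m)) :
    ∃ a b ε : ℝ, 0 < ε ∧ a - b = σ ∧ ∀ δ : ℝ, |δ| ≤ ε →
      Ly m * z m ≤ y m + δ * b ∧ y m + δ * b ≤ Uy m * z m ∧
      Lx m * w m ≤ x m + δ * a ∧ x m + δ * a ≤ Ux m * w m ∧
      (x m + δ * a) * (y m + δ * b) = 0 := by
  obtain ⟨-, -, -, -, hy1, hy2, hx1, hx2, -, -⟩ := hQ.2.1 m hm1 hmT
  have habs : ∀ δ : ℝ, |δ * σ| = |δ| := by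
    intro δ; rcases hσ with rfl | rfl <;> simp [abs_mul]
  rcases hfree with ⟨hy0, hw1, h1, h2⟩ | ⟨hx0, hz1, h1, h2⟩
  · refine ⟨σ, 0, min (x m - Lx m) (Ux m - x m), by simp [sub_pos, h1, h2], by ring, ?_⟩
    intro δ hδ
    have hδσ : |δ * σ| ≤ min (x m - Lx m) (Ux m - x m) := (habs δ).le.trans hδ
    have hb1 : -(x m - Lx m) ≤ δ * σ := by
      have := (abs_le.1 hδσ).1
      have h' : min (x m - Lx m) (Ux m - x m) ≤ x m - Lx m := min_le_left _ _
      linarith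
    have hb2 : δ * σ ≤ Ux m - x m := by
      have := (abs_le.1 hδσ).2
      have h' : min (x m - Lx m) (Ux m - x m) ≤ Ux m - x m := min_le_right _ _
      linarith
    refine ⟨by simpa [hy0] using hy1, by simpa [hy0] using hy2, ?_, ?_, by simp [hy0]⟩
    · rw [hw1]; linarith
    · rw [hw1]; linarith
  · refine ⟨0, -σ, min (y m - Ly m) (Uy m - y m), by simp [sub_pos, h1, h2], by ring, ?_⟩
    intro δ hδ
    have habs' : ∀ δ : ℝ, |δ * -σ| = |δ| := by
      intro δ; rcases hσ with rfl | rfl <;> simp [abs_mul]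
    have hδσ : |δ * -σ| ≤ min (y m - Ly m) (Uy m - y m) := (habs' δ).le.trans hδ
    have hb1 : -(y m - Ly m) ≤ δ * -σ := by
      have := (abs_le.1 hδσ).1
      have h' : min (y m - Ly m) (Uy m - y m) ≤ y m - Ly m := min_le_left _ _
      linarith
    have hb2 : δ * -σ ≤ Uy m - y m := by
      have := (abs_le.1 hδσ).2
      have h' : min (y m - Ly m) (Uy m - y m) ≤ Uy m - y m := min_le_right _ _
      linarith
    refine ⟨?_, ?_, by simpa [hx0] using hx1, by simpa [hx0] using hx2, by simp [hx0]⟩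
    · rw [hz1]; linarith
    · rw [hz1]; linarith

lemma perturb_contra {T : ℕ} {s0 : ℝ} {Ls Us Lx Ux Ly Uy x y s w z : ℕ → ℝ}
    (hext : (x, y, s, w, z) ∈
      Set.extremePoints ℝ (convexHull ℝ (Q1 T s0 Ls Us Lx Ux Ly Uy)))
    (hQ : Q1mem T s0 Ls Us Lx Ux Ly Uy x y s w z)
    (dx dy ds : ℕ → ℝ) (ε : ℝ) (hε : 0 < ε)
    (H0 : ds 0 = 0)
    (H1 : ∀ k, 1 ≤ k → k ≤ T → ds k = ds (k - 1) - dy k + dx k)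
    (H2 : ∀ k, ¬(1 ≤ k ∧ k ≤ T) → dx k = 0 ∧ dy k = 0 ∧ ds k = 0)
    (H3 : ∀ δ : ℝ, |δ| ≤ ε → ∀ k, 1 ≤ k → k ≤ T →
      Ls k ≤ s k + δ * ds k ∧ s k + δ * ds k ≤ Us k ∧
      Ly k * z k ≤ y k + δ * dy k ∧ y k + δ * dy k ≤ Uy k * z k ∧
      Lx k * w k ≤ x k + δ * dx k ∧ x k + δ * dx k ≤ Ux k * w k ∧
      (x k + δ * dx k) * (y k + δ * dy k) = 0)
    {i : ℕ} (hi : dx i - dy i = 1) : False := by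
  set d : (ℕ → ℝ) × (ℕ → ℝ) × (ℕ → ℝ) × (ℕ → ℝ) × (ℕ → ℝ) := (dx, dy, ds, 0, 0) with hd
  have hplus : (x, y, s, w, z) + ε • d ∈ Q1 T s0 Ls Us Lx Ux Ly Uy := by
    have hm := perturb_mem hQ dx dy ds ε H0 H1 H2 (H3 ε (by rw [abs_of_pos hε]))
    show Q1mem T s0 Ls Us Lx Ux Ly Uy _ _ _ _ _
    simp only [hd, Prod.smul_mk, Prod.mk_add_mk, smul_zero, add_zero]
    exact hm
  have hminus : (x, y, s, w, z) - ε • d ∈ Q1 T s0 Ls Us Lx Ux Ly Uy := by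
    have hm := perturb_mem hQ dx dy ds (-ε) H0 H1 H2
      (H3 (-ε) (by rw [abs_neg, abs_of_pos hε]))
    have hrw : (x, y, s, w, z) - ε • d = (x, y, s, w, z) + (-ε) • d := by module
    rw [hrw]
    show Q1mem T s0 Ls Us Lx Ux Ly Uy _ _ _ _ _
    simp only [hd, Prod.smul_mk, Prod.mk_add_mk, smul_zero, add_zero]
    exact hm
  have hzero := extreme_perturb hext hε hplus hminus
  have hdx : dx = 0 := congrArg (fun q => q.1) hzero
  have hdy : dy = 0 := congrArg (fun q => q.2.1) hzero
  rw [hdx, hdy] at hi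
  simpa using hi

lemma single_contra {T : ℕ} {s0 : ℝ} {Ls Us Lx Ux Ly Uy x y s w z : ℕ → ℝ}
    (hext : (x, y, s, w, z) ∈
      Set.extremePoints ℝ (convexHull ℝ (Q1 T s0 Ls Us Lx Ux Ly Uy)))
    (hQ : Q1mem T s0 Ls Us Lx Ux Ly Uy x y s w z)
    {i : ℕ} (hi1 : 1 ≤ i) (hiT : i ≤ T)
    (hfree : (y i = 0 ∧ w i = 1 ∧ Lx i < x i ∧ x i < Ux i) ∨
             (x i = 0 ∧ z i = 1 ∧ Ly i < y i ∧ y i < Uy i))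
    (hstrict : ∀ k, i ≤ k → k ≤ T → Ls k < s k ∧ s k < Us k) : False := by
  classical
  obtain ⟨a, b, ε1, hε1, hab, hfeas⟩ := free_dir hQ hi1 hiT 1 (Or.inl rfl) hfree
  obtain ⟨ε, hε, hεe, hεg⟩ := exists_eps (Finset.Icc i T)
    (fun k => min (s k - Ls k) (Us k - s k))
    (fun k hk => by
      obtain ⟨h1, h2⟩ := Finset.mem_Icc.1 hk
      obtain ⟨g1, g2⟩ := hstrict k h1 h2
      simp [sub_pos, g1, g2]) ε1 hε1
  set dx : ℕ → ℝ := fun k => if k = i then a else 0 with hdx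
  set dy : ℕ → ℝ := fun k => if k = i then b else 0 with hdy
  set ds : ℕ → ℝ := fun k => if i ≤ k ∧ k ≤ T then 1 else 0 with hds
  refine perturb_contra hext hQ dx dy ds ε hε ?_ ?_ ?_ ?_ (i := i) ?_
  · simp only [hds]
    rw [if_neg (by omega)]
  · intro k hk1 hkT
    simp only [hdx, hdy, hds]
    split_ifs with h1 h2 h3 h4 h5 h6 h7 h8 <;> first | omega | linarith | norm_num
  · intro k hk
    simp only [hdx, hdy, hds]
    refine ⟨?_, ?_, ?_⟩ <;> rw [if_neg (by omega)]
  · intro δ hδ k hk1 hkT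
    have hδ1 : |δ| ≤ ε1 := hδ.trans hεe
    obtain ⟨hQ1, hQ2, hQ3, hQ4, hQ5, hQ6, hQ7, hQ8, -, -⟩ := hQ.2.1 k hk1 hkT
    have hstock : Ls k ≤ s k + δ * ds k ∧ s k + δ * ds k ≤ Us k := by
      simp only [hds]
      by_cases hik : i ≤ k ∧ k ≤ T
      · rw [if_pos hik]
        have := hεg k (Finset.mem_Icc.2 hik)
        have hd1 := (abs_le.1 hδ).1
        have hd2 := (abs_le.1 hδ).2
        constructor
        · have := le_trans this (min_le_left _ _); linarith
        · have := le_trans ((hεg k (Finset.mem_Icc.2 hik))) (min_le_right _ _); linarith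
      · rw [if_neg hik]
        constructor <;> simp only [mul_zero, add_zero] <;> assumption
    by_cases hki : k = i
    · subst hki
      obtain ⟨f1, f2, f3, f4, f5⟩ := hfeas δ hδ1
      simp only [hdx, hdy, if_pos rfl]
      exact ⟨hstock.1, hstock.2, f1, f2, f3, f4, f5⟩
    · simp only [hdx, hdy, if_neg hki, mul_zero, add_zero]
      exact ⟨hstock.1, hstock.2, hQ5, hQ6, hQ7, hQ8, hQ2⟩
  · simp only [hdx, hdy, if_pos rfl]
    exact hab

lemma double_contra {T : ℕ} {s0 : ℝ} {Ls Us Lx Ux Ly Uy x y s w z : ℕ → ℝ}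
    (hext : (x, y, s, w, z) ∈
      Set.extremePoints ℝ (convexHull ℝ (Q1 T s0 Ls Us Lx Ux Ly Uy)))
    (hQ : Q1mem T s0 Ls Us Lx Ux Ly Uy x y s w z)
    {i j : ℕ} (hi1 : 1 ≤ i) (hij : i < j) (hjT : j ≤ T)
    (hfi : (y i = 0 ∧ w i = 1 ∧ Lx i < x i ∧ x i < Ux i) ∨
           (x i = 0 ∧ z i = 1 ∧ Ly i < y i ∧ y i < Uy i))
    (hfj : (y j = 0 ∧ w j = 1 ∧ Lx j < x j ∧ x j < Ux j) ∨
           (x j = 0 ∧ z j = 1 ∧ Ly j < y j ∧ y j < Uy j))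
    (hstrict : ∀ k, i ≤ k → k ≤ j - 1 → Ls k < s k ∧ s k < Us k) : False := by
  classical
  obtain ⟨ai, bi, εi, hεi, habi, hfeasi⟩ := free_dir hQ hi1 (by omega) 1 (Or.inl rfl) hfi
  obtain ⟨aj, bj, εj, hεj, habj, hfeasj⟩ :=
    free_dir hQ (m := j) (by omega) hjT (-1) (Or.inr rfl) hfj
  obtain ⟨ε, hε, hεe, hεg⟩ := exists_eps (Finset.Icc i (j - 1))
    (fun k => min (s k - Ls k) (Us k - s k))
    (fun k hk => by
      obtain ⟨h1, h2⟩ := Finset.mem_Icc.1 hk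
      obtain ⟨g1, g2⟩ := hstrict k h1 h2
      simp [sub_pos, g1, g2]) (min εi εj) (lt_min hεi hεj)
  set dx : ℕ → ℝ := fun k => if k = i then ai else if k = j then aj else 0 with hdx
  set dy : ℕ → ℝ := fun k => if k = i then bi else if k = j then bj else 0 with hdy
  set ds : ℕ → ℝ := fun k => if i ≤ k ∧ k ≤ j - 1 then 1 else 0 with hds
  refine perturb_contra hext hQ dx dy ds ε hε ?_ ?_ ?_ ?_ (i := i) ?_
  · simp only [hds]
    rw [if_neg (by omega)]
  · intro k hk1 hkT
    simp only [hdx, hdy, hds]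
    split_ifs <;> first | omega | linarith | norm_num
  · intro k hk
    simp only [hdx, hdy, hds]
    refine ⟨?_, ?_, ?_⟩ <;> rw [if_neg (by omega)] <;> rw [if_neg (by omega)]
  · intro δ hδ k hk1 hkT
    have hδi : |δ| ≤ εi := hδ.trans (hεe.trans (min_le_left _ _))
    have hδj : |δ| ≤ εj := hδ.trans (hεe.trans (min_le_right _ _))
    obtain ⟨hQ1, hQ2, hQ3, hQ4, hQ5, hQ6, hQ7, hQ8, -, -⟩ := hQ.2.1 k hk1 hkT
    have hstock : Ls k ≤ s k + δ * ds k ∧ s k + δ * ds k ≤ Us k := by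
      simp only [hds]
      by_cases hik : i ≤ k ∧ k ≤ j - 1
      · rw [if_pos hik]
        have hg := hεg k (Finset.mem_Icc.2 hik)
        have hd1 := (abs_le.1 hδ).1
        have hd2 := (abs_le.1 hδ).2
        constructor
        · have := le_trans hg (min_le_left _ _); linarith
        · have := le_trans hg (min_le_right _ _); linarith
      · rw [if_neg hik]
        constructor <;> simp only [mul_zero, add_zero] <;> assumption
    by_cases hki : k = i
    · subst hki
      obtain ⟨f1, f2, f3, f4, f5⟩ := hfeasi δ hδi
      simp only [hdx, hdy, if_pos rfl]
      exact ⟨hstock.1, hstock.2, f1, f2, f3, f4, f5⟩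
    · by_cases hkj : k = j
      · subst hkj
        obtain ⟨f1, f2, f3, f4, f5⟩ := hfeasj δ hδj
        simp only [hdx, hdy, if_neg hki, if_pos rfl]
        exact ⟨hstock.1, hstock.2, f1, f2, f3, f4, f5⟩
      · simp only [hdx, hdy, if_neg hki, if_neg hkj, mul_zero, add_zero]
        exact ⟨hstock.1, hstock.2, hQ5, hQ6, hQ7, hQ8, hQ2⟩
  · simp only [hdx, hdy, if_pos rfl]
    exact habi

/-- **Theorem**: at every extreme point of `P1 = conv(Q1)`, the stock level at
the end of period `t` lies in the set `S_t`. -/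
theorem stock_of_extremePoint_mem_stockLevelSet
    (T : ℕ) (hT : 1 ≤ T) (s0 : ℝ) (Ls Us Lx Ux Ly Uy : ℕ → ℝ)
    (hnn : ∀ t, 1 ≤ t → t ≤ T →
      0 ≤ Ls t ∧ 0 ≤ Us t ∧ 0 ≤ Lx t ∧ 0 ≤ Ux t ∧ 0 ≤ Ly t ∧ 0 ≤ Uy t)
    (t : ℕ) (ht1 : 1 ≤ t) (htT : t ≤ T) (x y s w z : ℕ → ℝ)
    (hext : (x, y, s, w, z) ∈
      Set.extremePoints ℝ (convexHull ℝ (Q1 T s0 Ls Us Lx Ux Ly Uy))) :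
    s t ∈ stockLevelSet T t s0 Ls Us Lx Ux Ly Uy := by
  classical
  have hQmem : (x, y, s, w, z) ∈ Q1 T s0 Ls Us Lx Ux Ly Uy :=
    extremePoints_convexHull_subset hext
  have hQ : Q1mem T s0 Ls Us Lx Ux Ly Uy x y s w z := hQmem
  have hst1 : Ls t ≤ s t := (hQ.2.1 t ht1 htT).2.2.1
  have hst2 : s t ≤ Us t := (hQ.2.1 t ht1 htT).2.2.2.1
  set P : ℕ → Prop := fun k => s k = Ls k ∨ s k = Us k with hP
  set a := Nat.findGreatest P t with ha
  obtain ⟨haT, haP, hamax⟩ := Nat.findGreatest_eq_iff.1 ha.symm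
  have hstricta : ∀ k, a < k → k ≤ t → Ls k < s k ∧ s k < Us k := by
    intro k hk1 hk2
    have hk1' : 1 ≤ k := by omega
    have hnP : ¬P k := hamax hk1 hk2
    simp only [hP, not_or] at hnP
    obtain ⟨g1, g2⟩ := hnP
    exact ⟨lt_of_le_of_ne (hQ.2.1 k hk1' (by omega)).2.2.1 (Ne.symm g1),
      lt_of_le_of_ne (hQ.2.1 k hk1' (by omega)).2.2.2.1 g2⟩
  by_cases hA : ∀ ii, a + 1 ≤ ii → ii ≤ t →
      RepCoef (Ly ii) (Uy ii) (Lx ii) (Ux ii) (x ii) (y ii)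
  · -- Case (a): anchor in the past.
    obtain ⟨v1, v2, u1, u2, hb1, hb2, hb3, hb4, hsum, hzero, heq⟩ :=
      assemble Ly Uy Lx Ux x y (a + 1) t hA
    have hKclause : s a = s0 ∨ (∃ i, 1 ≤ i ∧ i ≤ t ∧ s a = Us i) ∨
        (∃ i, 1 ≤ i ∧ i ≤ t ∧ s a = Ls i) := by
      rcases Nat.eq_zero_or_pos a with h0 | hapos
      · rw [h0]; exact Or.inl hQ.1
      · rcases haP (by omega) with h | h
        · exact Or.inr (Or.inr ⟨a, hapos, haT, h⟩)
        · exact Or.inr (Or.inl ⟨a, hapos, haT, h⟩)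
    have hU : ∑ i ∈ Finset.Icc (a + 1) t, (u1 i * Lx i + u2 i * Ux i) =
        ∑ i ∈ Finset.Icc 1 t, (u1 i * Lx i + u2 i * Ux i) := by
      refine Finset.sum_subset (Finset.Icc_subset_Icc (by omega) le_rfl) ?_
      intro i hi hni
      rw [Finset.mem_Icc] at hi hni
      obtain ⟨z1, z2, z3, z4⟩ := hzero i (by omega)
      simp [z3, z4]
    have hV : ∑ i ∈ Finset.Icc (a + 1) t, (v1 i * Ly i + v2 i * Uy i) =
        ∑ i ∈ Finset.Icc 1 t, (v1 i * Ly i + v2 i * Uy i) := by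
      refine Finset.sum_subset (Finset.Icc_subset_Icc (by omega) le_rfl) ?_
      intro i hi hni
      rw [Finset.mem_Icc] at hi hni
      obtain ⟨z1, z2, z3, z4⟩ := hzero i (by omega)
      simp [z1, z2]
    have ht' := telescope hQ a t haT htT
    have hxy : ∑ i ∈ Finset.Icc (a + 1) t, (x i - y i) =
        ∑ i ∈ Finset.Icc (a + 1) t, (u1 i * Lx i + u2 i * Ux i) -
        ∑ i ∈ Finset.Icc (a + 1) t, (v1 i * Ly i + v2 i * Uy i) := by
      rw [← Finset.sum_sub_distrib]
      refine Finset.sum_congr rfl ?_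
      intro i hi
      rw [Finset.mem_Icc] at hi
      exact heq i hi.1 hi.2
    refine ⟨Or.inl ⟨s a, hKclause, v1, v2, u1, u2, hb1, hb2, hb3, hb4, hsum, ?_⟩, hst1, hst2⟩
    rw [← hU, ← hV, ht', hxy]
    ring
  · -- there is a free period ii in (a, t]
    push_neg at hA
    obtain ⟨ii, hii1, hii2, hiirep⟩ := hA
    have hii1' : 1 ≤ ii := by omega
    have hiiT : ii ≤ T := by omega
    have hfree : (y ii = 0 ∧ w ii = 1 ∧ Lx ii < x ii ∧ x ii < Ux ii) ∨
        (x ii = 0 ∧ z ii = 1 ∧ Ly ii < y ii ∧ y ii < Uy ii) := by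
      rcases rep_or_free hQ hii1' hiiT with h | h | h
      · exact absurd h hiirep
      · exact Or.inl h
      · exact Or.inr h
    by_cases hB : ∃ jj, (t + 1 ≤ jj ∧ jj ≤ T) ∧ (s jj = Ls jj ∨ s jj = Us jj)
    · set b := Nat.find hB with hb
      obtain ⟨⟨hbt, hbT⟩, hbP⟩ := Nat.find_spec hB
      have hstrictb : ∀ k, t + 1 ≤ k → k ≤ b - 1 → Ls k < s k ∧ s k < Us k := by
        intro k hk1 hk2
        have hkb : k < b := by omega
        have hnP := Nat.find_min hB hkb
        simp only [not_and, not_or] at hnP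
        have hkT : k ≤ T := by omega
        obtain ⟨g1, g2⟩ := hnP ⟨hk1, hkT⟩
        exact ⟨lt_of_le_of_ne (hQ.2.1 k (by omega) hkT).2.2.1 (Ne.symm g1),
          lt_of_le_of_ne (hQ.2.1 k (by omega) hkT).2.2.2.1 g2⟩
      by_cases hC : ∀ ii, t + 1 ≤ ii → ii ≤ b →
          RepCoef (Ly ii) (Uy ii) (Lx ii) (Ux ii) (x ii) (y ii)
      · -- Case (b): anchor in the future.
        obtain ⟨v1, v2, u1, u2, hb1, hb2, hb3, hb4, hsum, hzero, heq⟩ :=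
          assemble Ly Uy Lx Ux x y (t + 1) b hC
        have hKclause : (∃ i, t + 1 ≤ i ∧ i ≤ T ∧ s b = Us i) ∨
            (∃ i, t + 1 ≤ i ∧ i ≤ T ∧ s b = Ls i) := by
          rcases hbP with h | h
          · exact Or.inr ⟨b, hbt, hbT, h⟩
          · exact Or.inl ⟨b, hbt, hbT, h⟩
        have hU : ∑ i ∈ Finset.Icc (t + 1) b, (u1 i * Lx i + u2 i * Ux i) =
            ∑ i ∈ Finset.Icc (t + 1) T, (u1 i * Lx i + u2 i * Ux i) := by
          refine Finset.sum_subset (Finset.Icc_subset_Icc le_rfl hbT) ?_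
          intro i hi hni
          rw [Finset.mem_Icc] at hi hni
          obtain ⟨z1, z2, z3, z4⟩ := hzero i (by omega)
          simp [z3, z4]
        have hV : ∑ i ∈ Finset.Icc (t + 1) b, (v1 i * Ly i + v2 i * Uy i) =
            ∑ i ∈ Finset.Icc (t + 1) T, (v1 i * Ly i + v2 i * Uy i) := by
          refine Finset.sum_subset (Finset.Icc_subset_Icc le_rfl hbT) ?_
          intro i hi hni
          rw [Finset.mem_Icc] at hi hni
          obtain ⟨z1, z2, z3, z4⟩ := hzero i (by omega)
          simp [z1, z2]
        have ht' := telescope hQ t b (by omega) hbT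
        have hxy : ∑ i ∈ Finset.Icc (t + 1) b, (x i - y i) =
            ∑ i ∈ Finset.Icc (t + 1) b, (u1 i * Lx i + u2 i * Ux i) -
            ∑ i ∈ Finset.Icc (t + 1) b, (v1 i * Ly i + v2 i * Uy i) := by
          rw [← Finset.sum_sub_distrib]
          refine Finset.sum_congr rfl ?_
          intro i hi
          rw [Finset.mem_Icc] at hi
          exact heq i hi.1 hi.2
        refine ⟨Or.inr ⟨s b, hKclause, v1, v2, u1, u2, hb1, hb2, hb3, hb4, hsum, ?_⟩,
          hst1, hst2⟩
        rw [← hU, ← hV]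
        rw [hxy] at ht'
        linarith
      · -- a second free period jj in (t, b] : double perturbation, contradiction
        push_neg at hC
        obtain ⟨jj, hjj1, hjj2, hjjrep⟩ := hC
        have hjjT : jj ≤ T := by omega
        have hfreej : (y jj = 0 ∧ w jj = 1 ∧ Lx jj < x jj ∧ x jj < Ux jj) ∨
            (x jj = 0 ∧ z jj = 1 ∧ Ly jj < y jj ∧ y jj < Uy jj) := by
          rcases rep_or_free hQ (by omega : 1 ≤ jj) hjjT with h | h | h
          · exact absurd h hjjrep
          · exact Or.inl h
          · exact Or.inr h
        exfalso
        refine double_contra hext hQ hii1' (by omega) hjjT hfree hfreej ?_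
        intro k hk1 hk2
        rcases le_or_gt k t with hkt | hkt
        · exact hstricta k (by omega) hkt
        · exact hstrictb k (by omega) (by omega)
    · -- no tight stock after t : single perturbation, contradiction
      exfalso
      refine single_contra hext hQ hii1' hiiT hfree ?_
      intro k hk1 hk2
      rcases le_or_gt k t with hkt | hkt
      · exact hstricta k (by omega) hkt
      · have hknot : ¬(s k = Ls k ∨ s k = Us k) := by
          intro h
          exact hB ⟨k, ⟨by omega, hk2⟩, h⟩
        simp only [not_or] at hknot
        exact ⟨lt_of_le_of_ne (hQ.2.1 k (by omega) hk2).2.2.1 (Ne.symm hknot.1),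
          lt_of_le_of_ne (hQ.2.1 k (by omega) hk2).2.2.2.1 hknot.2⟩
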